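/- The real-number identity ∑_{j≥1} (−1)^j·j·(j² − 1)/(2^j − 1) = 6·∑_{j≥1} 1/(4^j·(1 + 2^{−j})⁴) holds, where both series converge absolutely. -/

import Mathlib

noncomputable section

private lemma choose_cast (n : ℕ) :
    (((n+3).choose 3 : ℕ) : ℝ) = ((n:ℝ)+1)*((n:ℝ)+2)*((n:ℝ)+3)/6 := by
  rw [Nat.choose_eq_descFactorial_div_factorial]
  rw [Nat.cast_div (Nat.factorial_dvd_descFactorial (n+3) 3) (by norm_num [Nat.factorial])]
  have : (n+3).descFactorial 3 = (n+3)*(n+2)*(n+1) := by simp [Nat.descFactorial]; ring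
  rw [this]; push_cast; norm_num [Nat.factorial]; ring

private lemma key_hasSum {z : ℝ} (hz : |z| < 1) :
    HasSum (fun m : ℕ => ((m:ℝ)+1) * (((m:ℝ)+1)^2 - 1) * z^(m+1)) (6 * z^2 / (1-z)^4) := by
  have hz' : ‖z‖ < 1 := by simpa using hz
  have H := (hasSum_choose_mul_geometric_of_norm_lt_one 3 hz').mul_left (6 * z^2)
  have H2 : HasSum (fun n : ℕ => (((n:ℝ)+1)+1) * ((((n:ℝ)+1)+1)^2 - 1) * z^(n+1+1))
      (6 * z^2 / (1-z)^4) := by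
    have e : (fun n : ℕ => (((n:ℝ)+1)+1) * ((((n:ℝ)+1)+1)^2 - 1) * z^(n+1+1))
        = fun n : ℕ => 6 * z^2 * (((n+3).choose 3 : ℕ) * z^n) := by
      funext n; rw [choose_cast]; ring
    rw [e, show 6*z^2/(1-z)^4 = 6*z^2*(1/(1-z)^(3+1)) by ring]
    exact H
  have H3 : HasSum (fun n : ℕ => ((↑(n+1):ℝ)+1) * (((↑(n+1):ℝ)+1)^2 - 1) * z^((n+1)+1))
      (6 * z^2 / (1-z)^4) := by
    convert H2 using 2 with n
    push_cast; ring
  have := (hasSum_nat_add_iff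
    (f := fun m : ℕ => ((m:ℝ)+1) * (((m:ℝ)+1)^2 - 1) * z^(m+1)) 1).mp H3
  simpa using this

/-- the double-sum term -/
private def F (m n : ℕ) : ℝ :=
  (-1)^(m+1) * ((m:ℝ)+1) * (((m:ℝ)+1)^2 - 1) * (((2:ℝ)^(m+1))⁻¹)^(n+1)

private lemma F_abs_le (m n : ℕ) :
    |F m n| ≤ (2*((m:ℝ)+1)^3*(1/2)^(m+1)) * ((1/2)^(n+1)) := by
  have hx : (((2:ℝ)^(m+1))⁻¹)^(n+1) = (1/2 : ℝ)^((m+1)*(n+1)) := by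
    rw [← inv_pow, pow_mul]; norm_num
  have hm1 : (1:ℝ) ≤ ((m:ℝ)+1)^2 := by nlinarith [Nat.cast_nonneg (α := ℝ) m]
  have habs : |F m n| = ((m:ℝ)+1) * (((m:ℝ)+1)^2 - 1) * (1/2:ℝ)^((m+1)*(n+1)) := by
    rw [F, hx, abs_mul, abs_mul, abs_mul]
    rw [abs_pow, abs_neg, abs_one, one_pow, one_mul]
    rw [abs_of_nonneg (by positivity), abs_of_nonneg (by linarith), abs_of_nonneg (by positivity)]
  rw [habs]
  have hexp : (1/2:ℝ)^((m+1)*(n+1)) ≤ (1/2:ℝ)^(m+n+1) := by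
    apply pow_le_pow_of_le_one (by norm_num) (by norm_num)
    have : (m+1)*(n+1) = m*n + m + n + 1 := by ring
    omega
  have h1 : ((m:ℝ)+1) * (((m:ℝ)+1)^2 - 1) ≤ ((m:ℝ)+1)^3 := by
    nlinarith [Nat.cast_nonneg (α := ℝ) m]
  have h2 : (1/2:ℝ)^(m+n+1) = 2 * ((1/2:ℝ)^(m+1) * (1/2:ℝ)^(n+1)) := by
    rw [← pow_add]
    rw [show m+1+(n+1) = (m+n+1)+1 by ring, pow_succ]
    ring
  calc ((m:ℝ)+1) * (((m:ℝ)+1)^2 - 1) * (1/2:ℝ)^((m+1)*(n+1))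
      ≤ ((m:ℝ)+1)^3 * (1/2:ℝ)^(m+n+1) := by
        apply mul_le_mul h1 hexp (by positivity) (by positivity)
    _ = (2*((m:ℝ)+1)^3*(1/2)^(m+1)) * ((1/2)^(n+1)) := by rw [h2]; ring

private lemma g1_summable : Summable (fun m : ℕ => 2*((m:ℝ)+1)^3*(1/2:ℝ)^(m+1)) := by
  have h : Summable (fun m : ℕ => ((m:ℝ))^3*(1/2:ℝ)^m) := by
    have := summable_pow_mul_geometric_of_norm_lt_one (R := ℝ) 3 (r := 1/2) (by norm_num)
    simpa using this
  have h2 : Summable (fun m : ℕ => ((m+1:ℕ):ℝ)^3*(1/2:ℝ)^(m+1)) := (summable_nat_add_iff 1).mpr h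
  refine (h2.mul_left 2).congr fun m => ?_
  push_cast; ring

private lemma F_abs_summable : Summable (fun p : ℕ × ℕ => |F p.1 p.2|) := by
  have hmaj : Summable (fun p : ℕ × ℕ =>
      (2*((p.1:ℝ)+1)^3*(1/2:ℝ)^(p.1+1)) * ((1/2:ℝ)^(p.2+1))) := by
    apply summable_mul_of_summable_norm (f := fun m : ℕ => 2*((m:ℝ)+1)^3*(1/2:ℝ)^(m+1))
      (g := fun n : ℕ => (1/2:ℝ)^(n+1))
    · simpa only [Real.norm_eq_abs] using g1_summable.abs
    · have : Summable (fun n : ℕ => (1/2:ℝ)^(n+1)) :=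
        (summable_nat_add_iff 1).mpr (summable_geometric_of_lt_one (by norm_num) (by norm_num))
      simpa only [Real.norm_eq_abs] using this.abs
  exact hmaj.of_nonneg_of_le (fun p => abs_nonneg _) (fun p => F_abs_le p.1 p.2)

private lemma F_summable : Summable (fun p : ℕ × ℕ => F p.1 p.2) :=
  F_abs_summable.of_abs

-- row sums
private lemma row_hasSum (m : ℕ) :
    HasSum (fun n : ℕ => F m n)
      ((-1)^(m+1) * ((m:ℝ)+1) * (((m:ℝ)+1)^2 - 1) / (2^(m+1) - 1)) := by
  have h2 : (1:ℝ) < 2^(m+1) := one_lt_pow₀ (by norm_num) (by omega)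
  set x : ℝ := ((2:ℝ)^(m+1))⁻¹ with hxdef
  have hx0 : 0 ≤ x := by positivity
  have hx1 : x < 1 := by
    rw [hxdef, inv_lt_one_iff₀]; right; exact h2
  have hg := (hasSum_geometric_of_lt_one hx0 hx1).mul_left
    ((-1)^(m+1) * ((m:ℝ)+1) * (((m:ℝ)+1)^2 - 1) * x)
  have e : (fun n : ℕ => (-1)^(m+1) * ((m:ℝ)+1) * (((m:ℝ)+1)^2 - 1) * x * x^n)
      = fun n : ℕ => F m n := by
    funext n; rw [F]; ring
  rw [e] at hg
  convert hg using 1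
  case e'_3 => rfl
  have h2ne : (2:ℝ)^(m+1) - 1 ≠ 0 := by linarith
  have h2ne' : (2:ℝ)^(m+1) ≠ 0 := by positivity
  have h1x : (1 - x) = (2^(m+1) - 1) * ((2:ℝ)^(m+1))⁻¹ := by
    rw [hxdef]; field_simp
  rw [hxdef, h1x]
  rw [div_eq_mul_inv]
  rw [mul_inv, inv_inv]
  field_simp

-- column sums
private lemma col_hasSum (n : ℕ) :
    HasSum (fun m : ℕ => F m n)
      (6 * ((1:ℝ) / (4 ^ (n+1) * (1 + ((2:ℝ) ^ (n+1))⁻¹) ^ 4))) := by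
  have h2 : (1:ℝ) < 2^(n+1) := one_lt_pow₀ (by norm_num) (by omega)
  set y : ℝ := ((2:ℝ)^(n+1))⁻¹ with hydef
  have hy0 : 0 < y := by positivity
  have hy1 : y < 1 := by rw [hydef, inv_lt_one_iff₀]; right; exact h2
  have hz : |(-y)| < 1 := by rw [abs_neg, abs_of_pos hy0]; exact hy1
  have H := key_hasSum hz
  have e : (fun m : ℕ => ((m:ℝ)+1) * (((m:ℝ)+1)^2 - 1) * (-y)^(m+1))
      = fun m : ℕ => F m n := by
    funext m
    rw [F]
    have : (((2:ℝ)^(m+1))⁻¹)^(n+1) = y^(m+1) := by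
      rw [hydef, ← inv_pow, ← inv_pow, ← pow_mul, ← pow_mul, Nat.mul_comm]
    rw [this, neg_pow]
    ring
  rw [e] at H
  convert H using 1
  have hkey : ((2:ℝ)^(n+1))^2 = (4:ℝ)^(n+1) := by
    rw [← pow_mul, Nat.mul_comm, pow_mul]
    norm_num
  have hy2 : y^2 = ((4:ℝ)^(n+1))⁻¹ := by rw [hydef, ← hkey]; exact inv_pow _ _
  have h1y : (0:ℝ) < 1 + y := by linarith
  have hyne : (1+y) ≠ 0 := ne_of_gt h1y
  have h4ne : ((4:ℝ)^(n+1)) ≠ 0 := by positivity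
  rw [show (1 - -y) = 1 + y by ring, neg_sq, hy2]
  field_simp

/-- the identity
`∑_{j≥1} (−1)^j j(j²−1)/(2^j−1) = 6 ∑_{j≥1} 1/(4^j (1+2^{−j})⁴)`
(both sums reindexed by `j = m + 1`). -/
theorem peripheral_path_length_identity' :
    Summable (fun m : ℕ =>
      |(-1 : ℝ) ^ (m + 1) * ((m : ℝ) + 1) * (((m : ℝ) + 1) ^ 2 - 1) / (2 ^ (m + 1) - 1)|) ∧
    Summable (fun m : ℕ => |(1 : ℝ) / (4 ^ (m + 1) * (1 + ((2 : ℝ) ^ (m + 1))⁻¹) ^ 4)|) ∧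
    ∑' m : ℕ, (-1 : ℝ) ^ (m + 1) * ((m : ℝ) + 1) * (((m : ℝ) + 1) ^ 2 - 1) /
        (2 ^ (m + 1) - 1) =
      6 * ∑' m : ℕ, (1 : ℝ) / (4 ^ (m + 1) * (1 + ((2 : ℝ) ^ (m + 1))⁻¹) ^ 4) := by
  have hrow : ∀ m, Summable (fun n : ℕ => F m n) := fun m => (row_hasSum m).summable
  have hcol : ∀ n, Summable (fun m : ℕ => F m n) := fun n => (col_hasSum n).summable
  refine ⟨?_, ?_, ?_⟩
  · -- LHS abs summable
    have hmaj : Summable (fun m : ℕ => 2*((m:ℝ)+1)^3*(1/2:ℝ)^(m+1)) := g1_summable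
    apply hmaj.of_nonneg_of_le (fun m => abs_nonneg _)
    intro m
    have h2 : (1:ℝ) < 2^(m+1) := one_lt_pow₀ (by norm_num) (by omega)
    have hden : (2:ℝ)^m ≤ 2^(m+1) - 1 := by
      have : (2:ℝ)^(m+1) = 2 * 2^m := by rw [pow_succ]; ring
      have h1 : (1:ℝ) ≤ 2^m := one_le_pow₀ (by norm_num)
      linarith
    have hpos : (0:ℝ) < 2^(m+1) - 1 := by linarith
    rw [abs_div, abs_mul, abs_mul, abs_pow, abs_neg, abs_one, one_pow, one_mul,
      abs_of_pos hpos]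
    have hm1 : (1:ℝ) ≤ ((m:ℝ)+1)^2 := by nlinarith [Nat.cast_nonneg (α := ℝ) m]
    rw [abs_of_nonneg (by positivity : (0:ℝ) ≤ (m:ℝ)+1),
      abs_of_nonneg (by linarith : (0:ℝ) ≤ ((m:ℝ)+1)^2 - 1)]
    have hnum : ((m:ℝ)+1) * (((m:ℝ)+1)^2 - 1) ≤ ((m:ℝ)+1)^3 := by
      nlinarith [Nat.cast_nonneg (α := ℝ) m]
    have hb : ((m:ℝ)+1) * (((m:ℝ)+1)^2 - 1) / (2^(m+1) - 1) ≤ ((m:ℝ)+1)^3 / 2^m := by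
      apply div_le_div₀ (by positivity) hnum (by positivity) hden
    refine hb.trans ?_
    have : ((m:ℝ)+1)^3 / 2^m = ((m:ℝ)+1)^3 * (1/2)^m := by
      rw [div_eq_mul_inv, ← inv_pow]; norm_num
    rw [this]
    have : (2:ℝ)*((m:ℝ)+1)^3*(1/2:ℝ)^(m+1) = ((m:ℝ)+1)^3 * (1/2)^m := by
      rw [pow_succ]; ring
    rw [this]
  · -- RHS abs summable
    have hgeo : Summable (fun m : ℕ => (1/4:ℝ)^(m+1)) :=
      (summable_nat_add_iff 1).mpr (summable_geometric_of_lt_one (by norm_num) (by norm_num))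
    apply hgeo.of_nonneg_of_le (fun m => abs_nonneg _)
    intro m
    have h1 : (0:ℝ) < 1 + ((2:ℝ)^(m+1))⁻¹ := by positivity
    have hge1 : (1:ℝ) ≤ 1 + ((2:ℝ)^(m+1))⁻¹ := by
      have : (0:ℝ) ≤ ((2:ℝ)^(m+1))⁻¹ := by positivity
      linarith
    have hden : (4:ℝ)^(m+1) ≤ 4^(m+1) * (1 + ((2:ℝ)^(m+1))⁻¹)^4 :=
      le_mul_of_one_le_right (by positivity) (one_le_pow₀ hge1)
    rw [abs_of_nonneg (by positivity)]
    rw [div_le_iff₀ (by positivity)]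
    calc (1:ℝ) = (1/4:ℝ)^(m+1) * 4^(m+1) := by
          rw [← mul_pow]; norm_num
      _ ≤ (1/4:ℝ)^(m+1) * (4^(m+1) * (1 + ((2:ℝ)^(m+1))⁻¹)^4) := by
          apply mul_le_mul_of_nonneg_left hden (by positivity)
  · -- the identity
    have hLHS : ∑' m : ℕ, (-1 : ℝ)^(m+1) * ((m:ℝ)+1) * (((m:ℝ)+1)^2 - 1) / (2^(m+1) - 1)
        = ∑' m : ℕ, ∑' n : ℕ, F m n := by
      congr 1; funext m; exact ((row_hasSum m).tsum_eq).symm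
    have hswap : ∑' m : ℕ, ∑' n : ℕ, F m n = ∑' n : ℕ, ∑' m : ℕ, F m n := by
      exact (Summable.tsum_comm (f := F) F_summable).symm
    have hRHS : ∑' n : ℕ, ∑' m : ℕ, F m n
        = ∑' n : ℕ, 6 * ((1:ℝ) / (4^(n+1) * (1 + ((2:ℝ)^(n+1))⁻¹)^4)) := by
      congr 1; funext n; exact (col_hasSum n).tsum_eq
    rw [hLHS, hswap, hRHS, tsum_mul_left]

end
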